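/- arXiv:2208.01560 — 2 statements merged into one kernel-verified Lean document; each statement's English description precedes it below -/
import Mathlib

section
/- Suppose each Φᵢ (i = 1,…,k) is a quasi-triangular system for (X, cl), let A ⊆ X be finite and B ⊆ X, and let rk^{Φ*} be the rank function of the finitary matroid (X, cl^{Φ*}). Then rk^{Φ*}(A|B) equals the maximal cardinality of a finite set A₀ ⊆ cl(Θ(A ∪ B)) such that the family (φ^r̄(a))_{r̄ ∈ ℕ^m, a ∈ A₀} is cl-independent over Θ(B). -/
open Set

/-- A finitary matroid (pregeometry): a closure operator satisfying monotonicity,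
idempotence, finite character and Steinitz exchange. -/
structure FinMatroid (X : Type*) where
  cl : Set X → Set X
  subset_cl : ∀ A : Set X, A ⊆ cl A
  cl_mono : ∀ ⦃A B : Set X⦄, A ⊆ B → cl A ⊆ cl B
  cl_idem : ∀ A : Set X, cl (cl A) = cl A
  cl_finChar : ∀ (A : Set X) (a : X), a ∈ cl A → ∃ A₀ ⊆ A, A₀.Finite ∧ a ∈ cl A₀
  cl_exchange : ∀ (a b : X) (A : Set X), a ∈ cl (A ∪ {b}) → a ∉ cl A → b ∈ cl (A ∪ {a})

namespace FinMatroid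

variable {X : Type*}

/-- `B` is `cl`-independent over `A`. -/
def Indep (M : FinMatroid X) (A B : Set X) : Prop :=
  ∀ b ∈ B, b ∉ M.cl (A ∪ (B \ {b}))

/-- `B₀` is a basis for `B` over `A`. -/
def IsBasisOver (M : FinMatroid X) (A B B₀ : Set X) : Prop :=
  B₀ ⊆ B ∧ M.Indep A B₀ ∧ B ⊆ M.cl (A ∪ B₀)

/-- The rank `rk(B|A)`: the common cardinality of bases of `B` over `A`. -/
noncomputable def rk (M : FinMatroid X) (B A : Set X) : ℕ :=
  sInf {n : ℕ | ∃ B₀ : Set X, M.IsBasisOver A B B₀ ∧ B₀.ncard = n}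

end FinMatroid

/-- `ψ` is a triangular system for the finitary matroid `M`. -/
def Triangular {X : Type*} (M : FinMatroid X) {n : ℕ} (ψ : Fin n → X → X) : Prop :=
  ∀ (i : Fin n) (a : X) (B : Set X), a ∈ M.cl B →
    ψ i a ∈ M.cl (⋃ j ∈ Finset.Iic i, (ψ j) '' B)

/-- `ψ` is quasi-triangular: the system augmented by the identity map is triangular. -/
def QuasiTriangular {X : Type*} (M : FinMatroid X) {n : ℕ} (ψ : Fin n → X → X) : Prop :=
  Triangular M (Fin.cons id ψ)

/-- The composite operator `φ^r̄ = φ₁^{r₁} ∘ ⋯ ∘ φ_m^{r_m}` (operators indexed by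
pairs `(i, j)` with `i : Fin k`, `j : Fin (d i)`). -/
def opPow {X : Type*} {k : ℕ} {d : Fin k → ℕ} (φ : ∀ i : Fin k, Fin (d i) → X → X)
    (r : ∀ i : Fin k, Fin (d i) → ℕ) : X → X :=
  (List.finRange k).foldr
    (fun i f => ((List.finRange (d i)).foldr (fun j g => (φ i j)^[r i j] ∘ g) id) ∘ f) id

/-- The operators pairwise commute. -/
def Commuting {X : Type*} {k : ℕ} {d : Fin k → ℕ}
    (φ : ∀ i : Fin k, Fin (d i) → X → X) : Prop :=
  ∀ i j i' j', Function.Commute (φ i j) (φ i' j')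

/-- `Φ^{(s̄)}(A)`: images of elements of `A` under all `φ^r̄` with `‖r̄‖ = s̄`. -/
def PhiEq {X : Type*} {k : ℕ} {d : Fin k → ℕ} (φ : ∀ i : Fin k, Fin (d i) → X → X)
    (s : Fin k → ℕ) (A : Set X) : Set X :=
  {x | ∃ r : ∀ i : Fin k, Fin (d i) → ℕ,
    (∀ i, ∑ j, r i j = s i) ∧ ∃ a ∈ A, x = opPow φ r a}

/-- `Φ^{≼(s̄)}(A)`: images of elements of `A` under all `φ^r̄` with `‖r̄‖ ≼ s̄`. -/
def PhiLe {X : Type*} {k : ℕ} {d : Fin k → ℕ} (φ : ∀ i : Fin k, Fin (d i) → X → X)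
    (s : Fin k → ℕ) (A : Set X) : Set X :=
  {x | ∃ r : ∀ i : Fin k, Fin (d i) → ℕ,
    (∀ i, ∑ j, r i j ≤ s i) ∧ ∃ a ∈ A, x = opPow φ r a}

/-- `|Φ^{(s̄)}|`: the number of `r̄ ∈ ℕ^m` with `‖r̄‖ = s̄`. -/
noncomputable def cntEq {k : ℕ} (d : Fin k → ℕ) (s : Fin k → ℕ) : ℕ :=
  Nat.card {r : ∀ i : Fin k, Fin (d i) → ℕ // ∀ i, ∑ j, r i j = s i}

/-- `|Φ^{≼(s̄)}|`: the number of `r̄ ∈ ℕ^m` with `‖r̄‖ ≼ s̄`. -/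
noncomputable def cntLe {k : ℕ} (d : Fin k → ℕ) (s : Fin k → ℕ) : ℕ :=
  Nat.card {r : ∀ i : Fin k, Fin (d i) → ℕ // ∀ i, ∑ j, r i j ≤ s i}

/-- `Θ(A)`: images of elements of `A` under all the operators `φ^r̄`, `r̄ ∈ ℕ^m`. -/
def Theta {X : Type*} {k : ℕ} {d : Fin k → ℕ} (φ : ∀ i : Fin k, Fin (d i) → X → X)
    (A : Set X) : Set X :=
  {x | ∃ r : ∀ i : Fin k, Fin (d i) → ℕ, ∃ a ∈ A, x = opPow φ r a}

/-- The `Φ`-closure operator. -/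
noncomputable def clPhi {X : Type*} {k : ℕ} {d : Fin k → ℕ} (M : FinMatroid X)
    (φ : ∀ i : Fin k, Fin (d i) → X → X) (B : Set X) : Set X :=
  {a | ∃ s : Fin k → ℕ, M.rk (PhiEq φ s {a}) (PhiEq φ s B) < cntEq d s}

/-- The `Φ*`-closure operator. -/
noncomputable def clPhiStar {X : Type*} {k : ℕ} {d : Fin k → ℕ} (M : FinMatroid X)
    (φ : ∀ i : Fin k, Fin (d i) → X → X) (B : Set X) : Set X :=
  {a | ∃ s : Fin k → ℕ, M.rk (PhiLe φ s {a}) (PhiLe φ s B) < cntLe d s}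

/-- View a function `Fin k → ℕ` as a monomial exponent. -/
noncomputable def expOf {k : ℕ} (e : Fin k → ℕ) : Fin k →₀ ℕ :=
  Finsupp.equivFunOnFinite.symm e

/-- The family `(φ^r̄(a))_{r̄ ∈ ℕ^m, a ∈ A₀}` is `cl`-independent over `C`: each
member is outside the closure of `C` together with all the other members. -/
def FamIndepOver {X : Type*} {k : ℕ} {d : Fin k → ℕ} (M : FinMatroid X)
    (φ : ∀ i : Fin k, Fin (d i) → X → X) (C A₀ : Set X) : Prop :=
  ∀ (r : ∀ i : Fin k, Fin (d i) → ℕ) (a : X), a ∈ A₀ →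
    opPow φ r a ∉ M.cl (C ∪
      {x | ∃ (u : ∀ i : Fin k, Fin (d i) → ℕ) (b : X),
        b ∈ A₀ ∧ (u ≠ r ∨ b ≠ a) ∧ x = opPow φ u b})


section Folds

variable {X : Type*} {α : Type*}

lemma foldr_id_pt (σ : α → X → X) (l : List α) (h : ∀ a ∈ l, ∀ x, σ a x = x) :
    ∀ x, l.foldr (fun a g => σ a ∘ g) id x = x := by
  induction l with
  | nil => intro x; rfl
  | cons a t ih =>
    intro x
    simp only [List.foldr_cons, Function.comp_apply]
    rw [ih (fun b hb => h b (List.mem_cons_of_mem a hb)) x,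
      h a (List.mem_cons_self) x]

lemma commute_foldr_pt (f : X → X) (σ : α → X → X) (l : List α)
    (h : ∀ a ∈ l, ∀ x, f (σ a x) = σ a (f x)) :
    ∀ x, f (l.foldr (fun a g => σ a ∘ g) id x) = l.foldr (fun a g => σ a ∘ g) id (f x) := by
  induction l with
  | nil => intro x; rfl
  | cons a t ih =>
    intro x
    simp only [List.foldr_cons, Function.comp_apply]
    rw [h a (List.mem_cons_self), ih (fun b hb x => h b (List.mem_cons_of_mem a hb) x)]

lemma foldr_merge_pt (σ τ ρ : α → X → X) (l : List α)
    (hστ : ∀ a ∈ l, ∀ x, σ a (τ a x) = ρ a x)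
    (hcomm : ∀ a ∈ l, ∀ b ∈ l, ∀ x, τ a (σ b x) = σ b (τ a x)) :
    ∀ x, l.foldr (fun a g => σ a ∘ g) id (l.foldr (fun a g => τ a ∘ g) id x)
      = l.foldr (fun a g => ρ a ∘ g) id x := by
  induction l with
  | nil => intro x; rfl
  | cons a t ih =>
    intro x
    simp only [List.foldr_cons, Function.comp_apply]
    have h1 : ∀ y, t.foldr (fun b g => σ b ∘ g) id (τ a y)
        = τ a (t.foldr (fun b g => σ b ∘ g) id y) := by
      intro y
      exact (commute_foldr_pt (τ a) σ t (fun b hb x =>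
        hcomm a (List.mem_cons_self) b (List.mem_cons_of_mem a hb) x) y).symm
    rw [h1, hστ a (List.mem_cons_self),
      ih (fun b hb x => hστ b (List.mem_cons_of_mem a hb) x)
        (fun b hb c hc x => hcomm b (List.mem_cons_of_mem a hb) c (List.mem_cons_of_mem a hc) x)]

end Folds

section OpPow

variable {X : Type*} {k : ℕ} {d : Fin k → ℕ} (φ : ∀ i : Fin k, Fin (d i) → X → X)

lemma opPow_eq_id (r : ∀ i : Fin k, Fin (d i) → ℕ) (hr : ∀ i j, r i j = 0) (x : X) :
    opPow φ r x = x := by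
  unfold opPow
  refine foldr_id_pt _ _ (fun i _ x => ?_) x
  refine foldr_id_pt _ _ (fun j _ x => ?_) x
  rw [hr i j]
  rfl

lemma opPow_zero (x : X) : opPow φ (fun _ _ => 0) x = x :=
  opPow_eq_id φ _ (fun _ _ => rfl) x

lemma opPow_comp (hcomm : Commuting φ) (v u : ∀ i : Fin k, Fin (d i) → ℕ) (x : X) :
    opPow φ v (opPow φ u x) = opPow φ (fun i j => v i j + u i j) x := by
  unfold opPow
  refine foldr_merge_pt _ _ _ _ (fun i _ x => ?_) (fun i _ i' _ x => ?_) x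
  · -- inner merge at index i
    refine foldr_merge_pt _ _ _ _ (fun j _ x => ?_) (fun j _ j' _ x => ?_) x
    · exact (Function.iterate_add_apply (φ i j) (v i j) (u i j) x).symm
    · exact ((hcomm i j i j').iterate_left (u i j)).iterate_right (v i j') x
  · -- inner folds at different indices commute
    refine (commute_foldr_pt _ _ _ (fun j' _ y => ?_) x)
    refine (commute_foldr_pt _ _ _ (fun j _ z => ?_) y).symm
    exact ((hcomm i' j' i j).iterate_left (v i' j')).iterate_right (u i j) z

end OpPow

section Counting

variable {k : ℕ} {d : Fin k → ℕ}

/-- The set of exponents with norm bounded by `s`. -/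
def ExpLe (d : Fin k → ℕ) (s : Fin k → ℕ) : Set (∀ i : Fin k, Fin (d i) → ℕ) :=
  {w | ∀ i, ∑ j, w i j ≤ s i}

lemma expLe_finite (s : Fin k → ℕ) : (ExpLe d s).Finite := by
  have hinj : Function.Injective
      (fun (w : ↥(ExpLe d s)) => (fun i (j : Fin (d i)) =>
        (⟨min (w.1 i j) (s i), by omega⟩ : Fin (s i + 1)))) := by
    intro w₁ w₂ h
    have h' : ∀ i j, min (w₁.1 i j) (s i) = min (w₂.1 i j) (s i) := by
      intro i j
      exact congrArg Fin.val (congrFun (congrFun h i) j)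
    apply Subtype.ext
    funext i j
    have hb1 : w₁.1 i j ≤ s i :=
      le_trans (Finset.single_le_sum (fun j' _ => Nat.zero_le _) (Finset.mem_univ j)) (w₁.2 i)
    have hb2 : w₂.1 i j ≤ s i :=
      le_trans (Finset.single_le_sum (fun j' _ => Nat.zero_le _) (Finset.mem_univ j)) (w₂.2 i)
    have := h' i j
    omega
  haveI : Finite ↥(ExpLe d s) := Finite.of_injective _ hinj
  exact Set.toFinite _

lemma zero_mem_expLe (s : Fin k → ℕ) : (fun _ _ => 0) ∈ ExpLe d s := by
  intro i
  simp [ExpLe]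

lemma cntLe_eq_ncard (s : Fin k → ℕ) : cntLe d s = (ExpLe d s).ncard := rfl

lemma cntLe_pos (s : Fin k → ℕ) : 0 < cntLe d s := by
  rw [cntLe_eq_ncard]
  rw [Set.ncard_pos (expLe_finite s)]
  exact ⟨_, zero_mem_expLe s⟩

end Counting

section MatroidLemmas

variable {X : Type*} (N : FinMatroid X)

lemma exists_basis_subset_aux :
    ∀ n : ℕ, ∀ C S T : Set X, T.Finite → T.ncard = n → T ⊆ S → S ⊆ N.cl (C ∪ T) →
      ∃ B₀, B₀ ⊆ T ∧ N.IsBasisOver C S B₀ := by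
  intro n
  induction n using Nat.strong_induction_on with
  | _ n ih =>
    intro C S T hT hn hTS hspan
    by_cases hind : N.Indep C T
    · exact ⟨T, subset_rfl, hTS, hind, hspan⟩
    · rw [FinMatroid.Indep] at hind
      push_neg at hind
      obtain ⟨x, hxT, hx⟩ := hind
      have hsub : C ∪ T ⊆ N.cl (C ∪ (T \ {x})) := by
        intro y hy
        rcases hy with hy | hy
        · exact N.subset_cl _ (Or.inl hy)
        · by_cases hyx : y = x
          · rw [hyx]; exact hx
          · exact N.subset_cl _ (Or.inr ⟨hy, hyx⟩)
      have hspan' : S ⊆ N.cl (C ∪ (T \ {x})) := by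
        intro y hy
        have := N.cl_mono hsub (hspan hy)
        rwa [N.cl_idem] at this
      have hlt : (T \ {x}).ncard < n := by
        rw [← hn]
        exact Set.ncard_diff_singleton_lt_of_mem hxT hT
      obtain ⟨B₀, hB₀, hbasis⟩ := ih _ hlt C S (T \ {x}) (hT.diff) rfl
        ((Set.diff_subset).trans hTS) hspan'
      exact ⟨B₀, hB₀.trans Set.diff_subset, hbasis⟩

lemma exists_basis_subset {C S T : Set X} (hT : T.Finite) (hTS : T ⊆ S)
    (hspan : S ⊆ N.cl (C ∪ T)) : ∃ B₀, B₀ ⊆ T ∧ N.IsBasisOver C S B₀ :=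
  exists_basis_subset_aux N (T.ncard) C S T hT rfl hTS hspan

lemma rk_le_of_basis {C S B₀ : Set X} (h : N.IsBasisOver C S B₀) :
    N.rk S C ≤ B₀.ncard :=
  Nat.sInf_le ⟨B₀, h, rfl⟩

lemma steinitz_aux :
    ∀ n : ℕ, ∀ B I B₀ : Set X, I.Finite → B₀.Finite → (I \ B₀).ncard = n →
      N.Indep B I → I ⊆ N.cl (B ∪ B₀) → I.ncard ≤ B₀.ncard := by
  intro n
  induction n using Nat.strong_induction_on with
  | _ n ih =>
    intro B I B₀ hI hB₀ hn hind hspan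
    by_cases hsub : I ⊆ B₀
    · exact Set.ncard_le_ncard hsub hB₀
    · obtain ⟨a, haI, haB₀⟩ : ∃ a, a ∈ I ∧ a ∉ B₀ := by
        by_contra h
        push_neg at h
        exact hsub (fun y hy => h y hy)
      have hnotcl : a ∉ N.cl (B ∪ (I \ {a})) := hind a haI
      set E₀ : Set X := B ∪ (B₀ ∩ I) with hE₀
      have ha0 : a ∉ N.cl E₀ := by
        intro h
        apply hnotcl
        apply N.cl_mono _ h
        intro y hy
        rcases hy with hy | hy
        · exact Or.inl hy
        · refine Or.inr ⟨hy.2, fun hya => haB₀ (hya ▸ hy.1)⟩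
      -- the collection of cardinalities of subsets of B₀ \ I spanning a over E₀
      set 𝒩 : Set ℕ := {m | ∃ D, D ⊆ B₀ \ I ∧ a ∈ N.cl (E₀ ∪ D) ∧ D.ncard = m} with h𝒩
      have hne : 𝒩.Nonempty := by
        refine ⟨(B₀ \ I).ncard, B₀ \ I, subset_rfl, ?_, rfl⟩
        apply N.cl_mono _ (hspan haI)
        intro y hy
        rcases hy with hy | hy
        · exact Or.inl (Or.inl hy)
        · by_cases hyI : y ∈ I
          · exact Or.inl (Or.inr ⟨hy, hyI⟩)
          · exact Or.inr ⟨hy, hyI⟩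
      obtain ⟨D, hDsub, hDcl, hDcard⟩ := Nat.sInf_mem hne
      have hDB₀ : D ⊆ B₀ := hDsub.trans Set.diff_subset
      have hDfin : D.Finite := hB₀.subset hDB₀
      have hDne : D.Nonempty := by
        rcases Set.eq_empty_or_nonempty D with h | h
        · exfalso; apply ha0; rw [h, Set.union_empty] at hDcl; exact hDcl
        · exact h
      obtain ⟨b, hbD⟩ := hDne
      have hbB₀ : b ∈ B₀ := hDB₀ hbD
      have hbI : b ∉ I := (hDsub hbD).2
      have hmin : a ∉ N.cl (E₀ ∪ (D \ {b})) := by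
        intro h
        have hmem : (D \ {b}).ncard ∈ 𝒩 := ⟨D \ {b}, (Set.diff_subset).trans hDsub, h, rfl⟩
        have := Nat.sInf_le hmem
        rw [← hDcard] at this
        exact absurd this (not_le.mpr (Set.ncard_diff_singleton_lt_of_mem hbD hDfin))
      have hexch : b ∈ N.cl ((E₀ ∪ (D \ {b})) ∪ {a}) := by
        apply N.cl_exchange a b _ _ hmin
        apply N.cl_mono _ hDcl
        intro y hy
        rcases hy with hy | hy
        · exact Or.inl (Or.inl hy)
        · by_cases hyb : y = b
          · exact Or.inr (hyb ▸ rfl)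
          · exact Or.inl (Or.inr ⟨hy, hyb⟩)
      set B₀' : Set X := insert a (B₀ \ {b}) with hB₀'
      have hB₀'fin : B₀'.Finite := (hB₀.diff).insert a
      have hkey : B ∪ B₀ ⊆ N.cl (B ∪ B₀') := by
        intro y hy
        rcases hy with hy | hy
        · exact N.subset_cl _ (Or.inl hy)
        · by_cases hyb : y = b
          · subst hyb
            apply N.cl_mono _ hexch
            intro z hz
            rcases hz with (hz | hz) | hz
            · rcases hz with hz | hz
              · exact Or.inl hz
              · exact Or.inr (Or.inr ⟨hz.1, fun h => hbI (h ▸ hz.2)⟩)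
            · exact Or.inr (Or.inr ⟨hDB₀ hz.1, hz.2⟩)
            · exact Or.inr (Or.inl hz)
          · exact N.subset_cl _ (Or.inr (Or.inr ⟨hy, hyb⟩))
      have hspan' : I ⊆ N.cl (B ∪ B₀') := by
        intro y hy
        have := N.cl_mono hkey (hspan hy)
        rwa [N.cl_idem] at this
      have hdiff : I \ B₀' = (I \ B₀) \ {a} := by
        ext y
        constructor
        · rintro ⟨hyI, hy⟩
          have hya : y ≠ a := fun h => hy (h ▸ Set.mem_insert _ _)
          refine ⟨⟨hyI, fun hyB₀ => ?_⟩, hya⟩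
          by_cases hyb : y = b
          · exact hbI (hyb ▸ hyI)
          · exact hy (Set.mem_insert_of_mem _ ⟨hyB₀, hyb⟩)
        · rintro ⟨⟨hyI, hyB₀⟩, hya⟩
          refine ⟨hyI, fun hy => ?_⟩
          rcases hy with hy | hy
          · exact hya hy
          · exact hyB₀ hy.1
      have hlt : (I \ B₀').ncard < n := by
        rw [hdiff, ← hn]
        exact Set.ncard_diff_singleton_lt_of_mem ⟨haI, haB₀⟩ (hI.diff)
      have hcard' : B₀'.ncard = B₀.ncard := by
        rw [hB₀', Set.ncard_insert_of_notMem (fun h => haB₀ h.1) (hB₀.diff),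
          Set.ncard_diff_singleton_add_one hbB₀ hB₀]
      have := ih _ hlt B I B₀' hI hB₀'fin rfl hind hspan'
      rwa [hcard'] at this

lemma steinitz {B I B₀ : Set X} (hI : I.Finite) (hB₀ : B₀.Finite)
    (hind : N.Indep B I) (hspan : I ⊆ N.cl (B ∪ B₀)) : I.ncard ≤ B₀.ncard :=
  steinitz_aux N _ B I B₀ hI hB₀ rfl hind hspan

end MatroidLemmas

section PhiLemmas

variable {X : Type*} {k : ℕ} {d : Fin k → ℕ} (M : FinMatroid X)
  (φ : ∀ i : Fin k, Fin (d i) → X → X)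

lemma phiLe_singleton (s : Fin k → ℕ) (a : X) :
    PhiLe φ s {a} = (fun r => opPow φ r a) '' (ExpLe d s) := by
  ext x
  constructor
  · rintro ⟨r, hr, a', ha', rfl⟩
    rw [Set.mem_singleton_iff] at ha'
    exact ⟨r, hr, by rw [ha']⟩
  · rintro ⟨r, hr, rfl⟩
    exact ⟨r, hr, a, rfl, rfl⟩

lemma phiLe_singleton_finite (s : Fin k → ℕ) (a : X) : (PhiLe φ s {a}).Finite := by
  rw [phiLe_singleton]
  exact (expLe_finite s).image _

/-- `M.cl Z ⊆ cl^{Φ*}(Z)`. -/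
lemma cl_subset_clPhiStar (Z : Set X) : M.cl Z ⊆ clPhiStar M φ Z := by
  intro a ha
  refine ⟨fun _ => 0, ?_⟩
  have hspan : PhiLe φ (fun _ => 0) {a} ⊆ M.cl (PhiLe φ (fun _ => 0) Z ∪ ∅) := by
    rintro x ⟨r, hr, a', ha', rfl⟩
    rw [Set.mem_singleton_iff] at ha'
    subst ha'
    have hr0 : ∀ i j, r i j = 0 := by
      intro i j
      have h1 : r i j ≤ ∑ j', r i j' :=
        Finset.single_le_sum (fun j' _ => Nat.zero_le _) (Finset.mem_univ j)
      have h2 : (∑ j', r i j') ≤ 0 := by simpa using hr i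
      omega
    rw [opPow_eq_id φ r hr0, Set.union_empty]
    apply M.cl_mono _ ha
    intro z hz
    exact ⟨fun _ _ => 0, fun i => by simp, z, hz, (opPow_zero φ z).symm⟩
  have hbasis : M.IsBasisOver (PhiLe φ (fun _ => 0) Z) (PhiLe φ (fun _ => 0) {a}) ∅ :=
    ⟨Set.empty_subset _, fun b hb => absurd hb (Set.notMem_empty b), hspan⟩
  calc M.rk (PhiLe φ (fun _ => 0) {a}) (PhiLe φ (fun _ => 0) Z)
      ≤ (∅ : Set X).ncard := rk_le_of_basis M hbasis
    _ = 0 := by simp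
    _ < cntLe d (fun _ => 0) := cntLe_pos _

/-- `Θ(Z) ⊆ cl^{Φ*}(Z)`. -/
lemma theta_subset_clPhiStar (hcomm : Commuting φ) (Z : Set X) :
    Theta φ Z ⊆ clPhiStar M φ Z := by
  rintro x ⟨u, c, hc, rfl⟩
  set s : Fin k → ℕ := fun i => ∑ j, u i j with hs
  refine ⟨s, ?_⟩
  set V : Set (∀ i : Fin k, Fin (d i) → ℕ) :=
    ExpLe d s \ {v | ∀ i, (∑ j, (v i j + u i j)) ≤ s i} with hV
  set T : Set X := (fun v => opPow φ v (opPow φ u c)) '' V with hT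
  have hVfin : V.Finite := (expLe_finite s).subset Set.diff_subset
  have hTfin : T.Finite := hVfin.image _
  have hTS : T ⊆ PhiLe φ s {opPow φ u c} := by
    rintro y ⟨v, hv, rfl⟩
    exact ⟨v, hv.1, opPow φ u c, rfl, rfl⟩
  have hspan : PhiLe φ s {opPow φ u c} ⊆ M.cl (PhiLe φ s Z ∪ T) := by
    rintro y ⟨v, hv, a', ha', rfl⟩
    rw [Set.mem_singleton_iff] at ha'
    subst ha'
    by_cases hcase : ∀ i, (∑ j, (v i j + u i j)) ≤ s i
    · apply M.subset_cl
      refine Or.inl ⟨fun i j => v i j + u i j, hcase, c, hc, ?_⟩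
      rw [opPow_comp φ hcomm v u c]
    · exact M.subset_cl _ (Or.inr ⟨v, ⟨hv, hcase⟩, rfl⟩)
  obtain ⟨B₀, hB₀T, hbasis⟩ := exists_basis_subset M hTfin hTS hspan
  have h1 : M.rk (PhiLe φ s {opPow φ u c}) (PhiLe φ s Z) ≤ B₀.ncard :=
    rk_le_of_basis M hbasis
  have h2 : B₀.ncard ≤ T.ncard := Set.ncard_le_ncard hB₀T hTfin
  have h3 : T.ncard ≤ V.ncard := Set.ncard_image_le hVfin
  have h4 : V.ncard < (ExpLe d s).ncard := by
    apply Set.ncard_lt_ncard _ (expLe_finite s)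
    rw [Set.ssubset_iff_of_subset Set.diff_subset]
    refine ⟨fun _ _ => 0, zero_mem_expLe s, fun h => ?_⟩
    exact h.2 (fun i => by simp [hs])
  rw [cntLe_eq_ncard]
  omega

/-- Direction 1: family independence implies `Φ*`-independence. -/
lemma clPhiStar_indep_of_famIndep {A₀ B : Set X}
    (hfam : FamIndepOver M φ (Theta φ B) A₀) :
    ∀ a ∈ A₀, a ∉ clPhiStar M φ (B ∪ (A₀ \ {a})) := by
  rintro a ha ⟨s, hs⟩
  set S : Set X := PhiLe φ s {a} with hS
  set C' : Set X := PhiLe φ s (B ∪ (A₀ \ {a})) with hC'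
  have hsub : ∀ r : ∀ i : Fin k, Fin (d i) → ℕ,
      C' ∪ (S \ {opPow φ r a}) ⊆ Theta φ B ∪
        {x | ∃ (u : ∀ i : Fin k, Fin (d i) → ℕ) (b : X),
          b ∈ A₀ ∧ (u ≠ r ∨ b ≠ a) ∧ x = opPow φ u b} := by
    intro r y hy
    rcases hy with ⟨u, hu, c, hc, rfl⟩ | ⟨hyS, hyne⟩
    · rcases hc with hc | hc
      · exact Or.inl ⟨u, c, hc, rfl⟩
      · exact Or.inr ⟨u, c, hc.1, Or.inr hc.2, rfl⟩
    · obtain ⟨u, hu, a', ha', rfl⟩ := hyS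
      rw [Set.mem_singleton_iff] at ha'
      refine Or.inr ⟨u, a, ha, Or.inl (fun h => hyne ?_), by rw [ha']⟩
      show opPow φ u a' ∈ ({opPow φ r a} : Set X)
      rw [h, ha']
      rfl
  have hindS : M.Indep C' S := by
    rintro x hx hmem
    obtain ⟨r, hr, a', ha', rfl⟩ := hx
    rw [Set.mem_singleton_iff] at ha'
    rw [ha'] at hmem
    exact hfam r a ha (M.cl_mono (hsub r) hmem)
  have hSbasis : M.IsBasisOver C' S S :=
    ⟨subset_rfl, hindS, fun x hx => M.subset_cl _ (Or.inr hx)⟩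
  have huniq : ∀ B₀, M.IsBasisOver C' S B₀ → B₀ = S := by
    intro B₀ hb
    apply Set.Subset.antisymm hb.1
    intro x hx
    by_contra hxB₀
    apply hindS x hx
    apply M.cl_mono _ (hb.2.2 hx)
    intro z hz
    rcases hz with hz | hz
    · exact Or.inl hz
    · exact Or.inr ⟨hb.1 hz, fun h => hxB₀ (h ▸ hz)⟩
  have hrk : M.rk S C' = S.ncard := by
    refine le_antisymm (rk_le_of_basis M hSbasis) ?_
    unfold FinMatroid.rk
    refine le_csInf ⟨S.ncard, S, hSbasis, rfl⟩ ?_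
    rintro n ⟨B₀, hb, rfl⟩
    rw [huniq B₀ hb]
  have hinj : Set.InjOn (fun r => opPow φ r a) (ExpLe d s) := by
    intro u hu v hv huv
    by_contra hne
    apply hfam v a ha
    apply M.subset_cl
    refine Or.inr ⟨u, a, ha, Or.inl hne, ?_⟩
    exact huv.symm
  have hcard : S.ncard = cntLe d s := by
    rw [hS, phiLe_singleton, Set.ncard_image_of_injOn hinj, cntLe_eq_ncard]
  rw [hrk, hcard] at hs
  exact lt_irrefl _ hs

end PhiLemmas

section Direction2

variable {X : Type*} {k : ℕ} {d : Fin k → ℕ} (M : FinMatroid X)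
  (φ : ∀ i : Fin k, Fin (d i) → X → X)

/-- Direction 2: `Φ*`-independence implies family independence. -/
lemma famIndep_of_clPhiStar_indep {A₀ B : Set X}
    (hind : ∀ a ∈ A₀, a ∉ clPhiStar M φ (B ∪ (A₀ \ {a}))) :
    FamIndepOver M φ (Theta φ B) A₀ := by
  classical
  intro r a ha hmem
  obtain ⟨F, hFsub, hFfin, hxF⟩ := M.cl_finChar _ _ hmem
  have hQ : ∀ y ∈ hFfin.toFinset, ∃ u : ∀ i : Fin k, Fin (d i) → ℕ, ∃ c : X,
      (c ∈ B ∨ (c ∈ A₀ ∧ (u ≠ r ∨ c ≠ a))) ∧ y = opPow φ u c := by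
    intro y hy
    rw [Set.Finite.mem_toFinset] at hy
    rcases hFsub hy with ⟨u, c, hc, rfl⟩ | ⟨u, b, hb, hne, rfl⟩
    · exact ⟨u, c, Or.inl hc, rfl⟩
    · exact ⟨u, b, Or.inr ⟨hb, hne⟩, rfl⟩
  choose exp cc hcc hrep using hQ
  set s : Fin k → ℕ := fun i => (∑ j, r i j) +
    ∑ y ∈ hFfin.toFinset.attach, ∑ j, exp y.1 y.2 i j with hsdef
  have hrs : ∀ i, (∑ j, r i j) ≤ s i := fun i => Nat.le_add_right _ _
  have hus : ∀ (y : X) (hy : y ∈ hFfin.toFinset), ∀ i, (∑ j, exp y hy i j) ≤ s i := by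
    intro y hy i
    have h1 : (∑ j, exp y hy i j) ≤ ∑ z ∈ hFfin.toFinset.attach, ∑ j, exp z.1 z.2 i j :=
      Finset.single_le_sum (f := fun z => ∑ j, exp z.1 z.2 i j)
        (fun z _ => Nat.zero_le _) (Finset.mem_attach _ ⟨y, hy⟩)
    simp only [hsdef]
    omega
  set S : Set X := PhiLe φ s {a} with hS
  set C' : Set X := PhiLe φ s (B ∪ (A₀ \ {a})) with hC'
  have hSfin : S.Finite := phiLe_singleton_finite φ s a
  have hrk : M.rk S C' < cntLe d s := by
    by_cases hinj : Set.InjOn (fun v => opPow φ v a) (ExpLe d s)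
    · set x : X := opPow φ r a with hx
      have hrEs : r ∈ ExpLe d s := hrs
      have hxS : x ∈ S := ⟨r, hrs, a, rfl, rfl⟩
      have hFsub' : F ⊆ C' ∪ (S \ {x}) := by
        intro y hy
        have hy' : y ∈ hFfin.toFinset := hFfin.mem_toFinset.mpr hy
        rcases hcc y hy' with hcB | ⟨hcA, hne⟩
        · exact Or.inl ⟨exp y hy', hus y hy', cc y hy', Or.inl hcB, hrep y hy'⟩
        · by_cases hca : cc y hy' = a
          · have hur : exp y hy' ≠ r := by
              rcases hne with h | h
              · exact h
              · exact absurd hca h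
            have hyeq : y = opPow φ (exp y hy') a := by
              conv_lhs => rw [hrep y hy']
              rw [hca]
            refine Or.inr ⟨⟨exp y hy', hus y hy', a, rfl, hyeq⟩, fun hyx => ?_⟩
            apply hur
            apply hinj (hus y hy') hrEs
            show opPow φ (exp y hy') a = opPow φ r a
            rw [← hyeq]
            exact hyx
          · exact Or.inl ⟨exp y hy', hus y hy', cc y hy', Or.inr ⟨hcA, hca⟩, hrep y hy'⟩
      have hxcl : x ∈ M.cl (C' ∪ (S \ {x})) := M.cl_mono hFsub' hxF
      have hspan : S ⊆ M.cl (C' ∪ (S \ {x})) := by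
        intro y hy
        by_cases hyx : y = x
        · rw [hyx]; exact hxcl
        · exact M.subset_cl _ (Or.inr ⟨hy, hyx⟩)
      obtain ⟨B₀, hB₀, hbasis⟩ := exists_basis_subset M (hSfin.diff) Set.diff_subset hspan
      have h1 := rk_le_of_basis M hbasis
      have h2 : B₀.ncard ≤ (S \ {x}).ncard := Set.ncard_le_ncard hB₀ (hSfin.diff)
      have h3 : (S \ {x}).ncard < S.ncard := Set.ncard_diff_singleton_lt_of_mem hxS hSfin
      have h4 : S.ncard = cntLe d s := by
        rw [hS, phiLe_singleton, Set.ncard_image_of_injOn hinj, cntLe_eq_ncard]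
      omega
    · rw [Set.InjOn] at hinj
      push_neg at hinj
      obtain ⟨u, hu, v, hv, huv, hne⟩ := hinj
      have hSeq : S = (fun w => opPow φ w a) '' (ExpLe d s \ {v}) := by
        rw [hS, phiLe_singleton]
        apply Set.Subset.antisymm
        · rintro y ⟨w, hw, rfl⟩
          by_cases hwv : w = v
          · refine ⟨u, ⟨hu, hne⟩, ?_⟩
            show opPow φ u a = opPow φ w a
            rw [hwv]
            exact huv
          · exact ⟨w, ⟨hw, hwv⟩, rfl⟩
        · rintro y ⟨w, hw, rfl⟩
          exact ⟨w, hw.1, rfl⟩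
      have hcardlt : S.ncard < cntLe d s := by
        rw [cntLe_eq_ncard, hSeq]
        calc ((fun w => opPow φ w a) '' (ExpLe d s \ {v})).ncard
            ≤ (ExpLe d s \ {v}).ncard := Set.ncard_image_le ((expLe_finite s).diff)
          _ < (ExpLe d s).ncard := Set.ncard_diff_singleton_lt_of_mem hv (expLe_finite s)
      have hspan : S ⊆ M.cl (C' ∪ S) := fun y hy => M.subset_cl _ (Or.inr hy)
      obtain ⟨B₀, hB₀, hbasis⟩ := exists_basis_subset M hSfin subset_rfl hspan
      have h1 := rk_le_of_basis M hbasis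
      have h2 : B₀.ncard ≤ S.ncard := Set.ncard_le_ncard hB₀ hSfin
      omega
  exact hind a ha ⟨s, hrk⟩

end Direction2
/-- **Corollary 3.4.** Suppose each `Φᵢ` is quasi-triangular, `A` is finite, and
`rk^{Φ*}` is the rank function of the finitary matroid `(X, cl^{Φ*})`. Then
`rk^{Φ*}(A|B)` is the maximal cardinality of a finite set `A₀ ⊆ cl(Θ(A ∪ B))` such
that the family `(φ^r̄(a))_{r̄ ∈ ℕ^m, a ∈ A₀}` is `cl`-independent over `Θ(B)`. -/
theorem statement12 {X : Type*} (M : FinMatroid X) {k : ℕ} (hk : 0 < k) {d : Fin k → ℕ}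
    (hd : ∀ i, 0 < d i) (φ : ∀ i : Fin k, Fin (d i) → X → X) (hcomm : Commuting φ)
    (hqtri : ∀ i, QuasiTriangular M (φ i)) (A B : Set X) (hA : A.Finite)
    (M' : FinMatroid X) (hM' : M'.cl = clPhiStar M φ) :
    IsGreatest {n : ℕ | ∃ A₀ : Set X, A₀.Finite ∧ A₀ ⊆ M.cl (Theta φ (A ∪ B)) ∧
      FamIndepOver M φ (Theta φ B) A₀ ∧ A₀.ncard = n} (M'.rk A B) := by

  classical
  have hspanA : A ⊆ M'.cl (B ∪ A) := fun y hy => M'.subset_cl _ (Or.inr hy)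
  obtain ⟨B₀, hB₀A, hbasis⟩ := exists_basis_subset M' hA subset_rfl hspanA
  have hB₀fin : B₀.Finite := hA.subset hB₀A
  have hrk : M'.rk A B = B₀.ncard := by
    refine le_antisymm (rk_le_of_basis M' hbasis) ?_
    unfold FinMatroid.rk
    refine le_csInf ⟨B₀.ncard, B₀, hbasis, rfl⟩ ?_
    rintro n ⟨B₁, hb1, rfl⟩
    exact steinitz M' hB₀fin (hA.subset hb1.1) hbasis.2.1
      (fun y hy => hb1.2.2 (hB₀A hy))
  constructor
  · -- membership: the M'-basis B₀ of A over B witnesses the maximum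
    refine ⟨B₀, hB₀fin, ?_, ?_, hrk.symm⟩
    · intro b hb
      apply M.subset_cl
      exact ⟨fun _ _ => 0, b, Or.inl (hB₀A hb), (opPow_zero φ b).symm⟩
    · apply famIndep_of_clPhiStar_indep M φ
      intro b hb
      rw [← hM']
      exact hbasis.2.1 b hb
  · -- upper bound
    rintro n ⟨A₀, hfin, hsubcl, hfam, rfl⟩
    have hindep : M'.Indep B A₀ := by
      intro b hb
      rw [hM']
      exact clPhiStar_indep_of_famIndep M φ hfam b hb
    have hA₀cl : A₀ ⊆ M'.cl (B ∪ B₀) := by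
      have h1 : Theta φ (A ∪ B) ⊆ M'.cl (A ∪ B) := by
        rw [hM']; exact theta_subset_clPhiStar M φ hcomm _
      have h2 : M.cl (Theta φ (A ∪ B)) ⊆ M'.cl (Theta φ (A ∪ B)) := by
        rw [hM']; exact cl_subset_clPhiStar M φ _
      have h3 : M'.cl (Theta φ (A ∪ B)) ⊆ M'.cl (A ∪ B) := by
        have := M'.cl_mono h1
        rwa [M'.cl_idem] at this
      have h4 : A ∪ B ⊆ M'.cl (B ∪ B₀) := by
        intro y hy
        rcases hy with hy | hy
        · exact hbasis.2.2 hy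
        · exact M'.subset_cl _ (Or.inl hy)
      have h5 : M'.cl (A ∪ B) ⊆ M'.cl (B ∪ B₀) := by
        have := M'.cl_mono h4
        rwa [M'.cl_idem] at this
      exact fun y hy => h5 (h3 (h2 (hsubcl hy)))
    rw [hrk]
    exact steinitz M' hfin hB₀fin hindep hA₀cl
end

section
/- Let I be an ideal of ℕ^m, i.e. a subset of ℕ^m that is downward closed under the product order ≼. For s̄ ∈ ℕ^k let H_I(s̄) := #{r̄ ∈ I : ‖r̄‖ = s̄}. Then there is a polynomial P ∈ ℚ[Y₁,…,Y_k] such that H_I(s̄) = P(s̄) for all s̄ ∈ ℕ^k with min(s₁,…,s_k) sufficiently large. -/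
open Finset

namespace Statement14Aux

/-- Eventually-polynomial functions `ℕ → ℚ`. -/
def EP (f : ℕ → ℚ) : Prop :=
  ∃ p : Polynomial ℚ, ∃ N : ℕ, ∀ s : ℕ, N ≤ s → f s = p.eval (s : ℚ)

theorem EP.congr {f g : ℕ → ℚ} (hf : EP f) (N₀ : ℕ) (h : ∀ s, N₀ ≤ s → g s = f s) :
    EP g := by
  obtain ⟨p, N, hp⟩ := hf
  exact ⟨p, max N N₀, fun s hs => (h s (le_of_max_le_right hs)).trans
    (hp s (le_of_max_le_left hs))⟩

theorem EP.const (c : ℚ) : EP fun _ => c :=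
  ⟨Polynomial.C c, 0, fun s _ => by simp⟩

theorem EP.sub {f g : ℕ → ℚ} (hf : EP f) (hg : EP g) : EP fun s => f s - g s := by
  obtain ⟨p, N, hp⟩ := hf
  obtain ⟨q, M, hq⟩ := hg
  exact ⟨p - q, max N M, fun s hs => by
    rw [Polynomial.eval_sub, ← hp s (le_of_max_le_left hs), ← hq s (le_of_max_le_right hs)]⟩

theorem exists_antideriv (p : Polynomial ℚ) :
    ∃ q : Polynomial ℚ, ∀ n : ℕ, ∑ u ∈ range n, p.eval (u : ℚ) = q.eval (n : ℚ) := by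
  induction p using Polynomial.induction_on' with
  | add p₁ p₂ h₁ h₂ =>
    obtain ⟨q₁, hq₁⟩ := h₁
    obtain ⟨q₂, hq₂⟩ := h₂
    exact ⟨q₁ + q₂, fun n => by simp [Finset.sum_add_distrib, hq₁ n, hq₂ n]⟩
  | monomial n a =>
    refine ⟨Polynomial.C a * ∑ i ∈ range (n + 1),
      Polynomial.C (bernoulli i * ((n + 1).choose i) / (n + 1)) * Polynomial.X ^ (n + 1 - i),
      fun m => ?_⟩
    simp only [Polynomial.eval_monomial, Polynomial.eval_mul, Polynomial.eval_C,
      Polynomial.eval_finset_sum, Polynomial.eval_pow, Polynomial.eval_X]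
    rw [← Finset.mul_sum]
    congr 1
    rw [sum_range_pow m n]
    refine Finset.sum_congr rfl fun i _ => by ring

theorem EP.sumRange {f : ℕ → ℚ} (hf : EP f) : EP fun s => ∑ u ∈ range (s + 1), f u := by
  obtain ⟨p, N, hp⟩ := hf
  obtain ⟨q, hq⟩ := exists_antideriv p
  refine ⟨q.comp (Polynomial.X + 1) + Polynomial.C ((∑ u ∈ range N, f u) - q.eval (N : ℚ)),
    N, fun s hs => ?_⟩
  show ∑ u ∈ range (s + 1), f u = _
  have h1 : ∑ u ∈ range (s + 1), f u
      = (∑ u ∈ range N, f u) + ∑ u ∈ Ico N (s + 1), f u := by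
    rw [range_eq_Ico, ← Finset.sum_Ico_consecutive _ (Nat.zero_le N) (by omega), ← range_eq_Ico]
  have h2 : ∑ u ∈ Ico N (s + 1), f u = ∑ u ∈ Ico N (s + 1), p.eval (u : ℚ) :=
    Finset.sum_congr rfl fun u hu => hp u (mem_Ico.mp hu).1
  have h3 : ∑ u ∈ Ico N (s + 1), p.eval (u : ℚ)
      = q.eval ((s + 1 : ℕ) : ℚ) - q.eval ((N : ℕ) : ℚ) := by
    rw [Finset.sum_Ico_eq_sub _ (by omega), hq, hq]
  rw [h1, h2, h3, Polynomial.eval_add, Polynomial.eval_comp, Polynomial.eval_C,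
    Polynomial.eval_add, Polynomial.eval_X, Polynomial.eval_one]
  push_cast
  ring

theorem EP.shift {f : ℕ → ℚ} (hf : EP f) (B : ℕ) : EP fun s => f (s - B) := by
  obtain ⟨p, N, hp⟩ := hf
  refine ⟨p.comp (Polynomial.X - Polynomial.C (B : ℚ)), N + B, fun s hs => ?_⟩
  show f (s - B) = _
  rw [Polynomial.eval_comp]
  have : ((s - B : ℕ) : ℚ) = (s : ℚ) - B := by
    have : B ≤ s := by omega
    push_cast [this]; ring
  rw [hp (s - B) (by omega)]
  simp [this]


/-! ### Counting compositions in a bounded box -/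

def gbox (n : ℕ) (b : Fin n → WithTop ℕ) (s : ℕ) : Finset (Fin n → ℕ) :=
  (Fintype.piFinset fun _ => Finset.range (s + 1)).filter
    fun v => (∀ j, ((v j : ℕ) : WithTop ℕ) < b j) ∧ ∑ j, v j = s

theorem mem_gbox {n : ℕ} {b : Fin n → WithTop ℕ} {s : ℕ} {v : Fin n → ℕ} :
    v ∈ gbox n b s ↔ (∀ j, ((v j : ℕ) : WithTop ℕ) < b j) ∧ ∑ j, v j = s := by
  constructor
  · intro hv; exact (Finset.mem_filter.mp hv).2
  · intro hv
    refine Finset.mem_filter.mpr ⟨Fintype.mem_piFinset.mpr fun j => ?_, hv⟩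
    rw [Finset.mem_range, Nat.lt_succ_iff, ← hv.2]
    exact Finset.single_le_sum (fun j _ => Nat.zero_le _) (Finset.mem_univ j)

theorem gbox_card_succ (n : ℕ) (b : Fin (n + 1) → WithTop ℕ) (s : ℕ) :
    (gbox (n + 1) b s).card
      = ∑ t ∈ (range (s + 1)).filter (fun t : ℕ => ((t : ℕ) : WithTop ℕ) < b (Fin.last n)),
          (gbox n (fun j => b j.castSucc) (s - t)).card := by
  rw [Finset.card_eq_sum_card_fiberwise (f := fun v => v (Fin.last n))
      (t := (range (s + 1)).filter fun t : ℕ => ((t : ℕ) : WithTop ℕ) < b (Fin.last n))]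
  · refine Finset.sum_congr rfl fun t ht => ?_
    rw [Finset.mem_filter, Finset.mem_range, Nat.lt_succ_iff] at ht
    obtain ⟨hts, htb⟩ := ht
    refine Finset.card_nbij' (fun v => Fin.init v) (fun w => Fin.snoc w t) ?_ ?_ ?_ ?_
    · intro v hv
      simp only [Finset.mem_coe] at hv ⊢
      rw [Finset.mem_filter] at hv
      obtain ⟨hv, hlast⟩ := hv
      rw [mem_gbox] at hv ⊢
      obtain ⟨hvb, hvs⟩ := hv
      rw [Fin.sum_univ_castSucc] at hvs
      refine ⟨fun j => hvb j.castSucc, ?_⟩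
      have : ∑ j : Fin n, Fin.init v j = ∑ j : Fin n, v j.castSucc := rfl
      rw [this]; omega
    · intro w hw
      simp only [Finset.mem_coe] at hw ⊢
      rw [mem_gbox] at hw
      obtain ⟨hwb, hws⟩ := hw
      rw [Finset.mem_filter, mem_gbox]
      refine ⟨⟨fun j => ?_, ?_⟩, by simp⟩
      · refine Fin.lastCases ?_ (fun i => ?_) j
        · simpa using htb
        · simpa using hwb i
      · rw [Fin.sum_univ_castSucc]
        simp only [Fin.snoc_castSucc, Fin.snoc_last]
        omega
    · intro v hv
      have hlast : v (Fin.last n) = t := (Finset.mem_filter.mp hv).2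
      rw [← hlast]
      exact Fin.snoc_init_self v
    · intro w _
      simp
  · intro v hv
    simp only [Finset.mem_coe] at hv ⊢
    rw [mem_gbox] at hv
    rw [Finset.mem_filter, Finset.mem_range, Nat.lt_succ_iff]
    refine ⟨?_, hv.1 _⟩
    rw [← hv.2]
    exact Finset.single_le_sum (fun j _ => Nat.zero_le _) (Finset.mem_univ _)

theorem sum_sub_lemma (g : ℕ → ℚ) :
    ∀ B s : ℕ, B ≤ s → ∑ t ∈ range B, g (s - t)
      = (∑ u ∈ range (s + 1), g u) - ∑ u ∈ range (s + 1 - B), g u := by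
  intro B
  induction B with
  | zero => intro s _; simp
  | succ B ih =>
      intro s hs
      rw [Finset.sum_range_succ, ih s (by omega)]
      have h1 : s + 1 - B = (s - B) + 1 := by omega
      have h2 : s + 1 - (B + 1) = s - B := by omega
      rw [h1, h2, Finset.sum_range_succ g (s - B)]
      ring

theorem gcount_EP (n : ℕ) (b : Fin n → WithTop ℕ) :
    EP fun s => ((gbox n b s).card : ℚ) := by
  induction n with
  | zero =>
      refine (EP.const 0).congr 1 fun s hs => ?_
      rw [Finset.card_eq_zero.mpr, Nat.cast_zero]
      ext v
      simp only [mem_gbox, Finset.notMem_empty, iff_false, not_and]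
      intro _
      simp only [Finset.univ_eq_empty, Finset.sum_empty]
      omega
  | succ n ih =>
      have hrec : ∀ s : ℕ, ((gbox (n + 1) b s).card : ℚ)
          = ∑ t ∈ (range (s + 1)).filter (fun t : ℕ => ((t : ℕ) : WithTop ℕ) < b (Fin.last n)),
              ((gbox n (fun j => b j.castSucc) (s - t)).card : ℚ) := by
        intro s; rw [gbox_card_succ]; push_cast; rfl
      set g : ℕ → ℚ := fun u => ((gbox n (fun j => b j.castSucc) u).card : ℚ) with hg
      have hgEP : EP g := ih _
      cases hb : b (Fin.last n) with
      | top =>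
          refine hgEP.sumRange.congr 0 fun s _ => ?_
          rw [hrec s]
          have hfil : (range (s + 1)).filter (fun t : ℕ => ((t : ℕ) : WithTop ℕ) < b (Fin.last n))
              = range (s + 1) := by
            refine Finset.filter_true_of_mem fun t _ => ?_
            rw [hb]; exact_mod_cast WithTop.coe_lt_top t
          rw [hfil]
          calc ∑ t ∈ range (s + 1), g (s - t)
              = ∑ t ∈ range (s + 1), g (s + 1 - 1 - t) := by simp
            _ = ∑ u ∈ range (s + 1), g u := Finset.sum_range_reflect g (s + 1)
      | coe B =>
          refine ((hgEP.sumRange).sub ((hgEP.sumRange).shift B)).congr B fun s hs => ?_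
          rw [hrec s]
          have hfil : (range (s + 1)).filter (fun t : ℕ => ((t : ℕ) : WithTop ℕ) < b (Fin.last n))
              = range B := by
            ext t
            simp only [Finset.mem_filter, Finset.mem_range, hb]
            rw [Nat.cast_withTop, WithTop.coe_lt_coe]
            omega
          rw [hfil, sum_sub_lemma g B s hs]
          have h1 : s + 1 - B = (s - B) + 1 := by omega
          rw [h1]


/-! ### Multivariate eventually polynomial functions -/

def MEP {k : ℕ} (f : (Fin k → ℕ) → ℚ) : Prop :=
  ∃ P : MvPolynomial (Fin k) ℚ, ∃ N : ℕ, ∀ s : Fin k → ℕ, (∀ i, N ≤ s i) →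
    f s = MvPolynomial.eval (fun i => (s i : ℚ)) P

variable {k : ℕ}

theorem MEP.congr {f g : (Fin k → ℕ) → ℚ} (hf : MEP f) (h : ∀ s, g s = f s) : MEP g := by
  obtain ⟨P, N, hP⟩ := hf
  exact ⟨P, N, fun s hs => (h s).trans (hP s hs)⟩

theorem MEP.zero : MEP fun _ : Fin k → ℕ => (0 : ℚ) :=
  ⟨0, 0, fun s _ => by simp⟩

theorem MEP.sub {f g : (Fin k → ℕ) → ℚ} (hf : MEP f) (hg : MEP g) :
    MEP fun s => f s - g s := by
  obtain ⟨P, N, hP⟩ := hf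
  obtain ⟨Q, M, hQ⟩ := hg
  refine ⟨P - Q, max N M, fun s hs => ?_⟩
  rw [map_sub, ← hP s fun i => le_trans (le_max_left _ _) (hs i),
    ← hQ s fun i => le_trans (le_max_right _ _) (hs i)]

theorem MEP.add {f g : (Fin k → ℕ) → ℚ} (hf : MEP f) (hg : MEP g) :
    MEP fun s => f s + g s := by
  obtain ⟨P, N, hP⟩ := hf
  obtain ⟨Q, M, hQ⟩ := hg
  refine ⟨P + Q, max N M, fun s hs => ?_⟩
  rw [map_add, ← hP s fun i => le_trans (le_max_left _ _) (hs i),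
    ← hQ s fun i => le_trans (le_max_right _ _) (hs i)]

theorem MEP.const_mul (c : ℚ) {f : (Fin k → ℕ) → ℚ} (hf : MEP f) :
    MEP fun s => c * f s := by
  obtain ⟨P, N, hP⟩ := hf
  exact ⟨MvPolynomial.C c * P, N, fun s hs => by
    show c * f s = _
    rw [map_mul, MvPolynomial.eval_C, hP s hs]⟩

theorem MEP.finsetSum {ι : Type*} {A : Finset ι} {f : ι → (Fin k → ℕ) → ℚ}
    (h : ∀ x ∈ A, MEP (f x)) : MEP fun s => ∑ x ∈ A, f x s := by
  classical
  induction A using Finset.induction_on with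
  | empty => exact MEP.zero.congr fun s => by simp
  | insert a A' hx ih =>
      refine (((h a (Finset.mem_insert_self a A')).add
        (ih fun x hxA => h x (Finset.mem_insert_of_mem hxA))).congr fun s => ?_)
      rw [Finset.sum_insert hx]

theorem MEP.prod_EP (g : ∀ _ : Fin k, ℕ → ℚ) (hg : ∀ i, EP (g i)) :
    MEP fun s => ∏ i, g i (s i) := by
  choose p N hp using hg
  refine ⟨∏ i, Polynomial.eval₂ MvPolynomial.C (MvPolynomial.X i) (p i),
    Finset.univ.sup N, fun s hs => ?_⟩
  rw [map_prod]
  refine Finset.prod_congr rfl fun i _ => ?_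
  rw [hp i (s i) (le_trans (Finset.le_sup (Finset.mem_univ i)) (hs i))]
  rw [Polynomial.hom_eval₂]
  have h1 : (MvPolynomial.eval fun i : Fin k => (s i : ℚ)).comp MvPolynomial.C
      = RingHom.id ℚ := by
    ext a; simp
  have h2 : MvPolynomial.eval (fun i : Fin k => (s i : ℚ)) (MvPolynomial.X i)
      = (s i : ℚ) := by simp
  rw [h1, h2]
  rfl


/-! ### Dickson's lemma: upward closed sets are finitely generated -/

theorem pwo {k : ℕ} (d : Fin k → ℕ) (S : Set (∀ i : Fin k, Fin (d i) → ℕ)) :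
    S.PartiallyWellOrderedOn (fun x y => ∀ i j, x i j ≤ y i j) := by
  intro f
  have hPWO : (Set.univ : Set ((Σ i : Fin k, Fin (d i)) → ℕ)).IsPWO :=
    Set.isPWO_of_wellQuasiOrderedLE _
  obtain ⟨m, n, hmn, hle⟩ := hPWO (fun n => ⟨fun p => (f n).1 p.1 p.2, Set.mem_univ _⟩)
  exact ⟨m, n, hmn, fun i j => hle ⟨i, j⟩⟩

theorem exists_gen {k : ℕ} (d : Fin k → ℕ) (U : Set (∀ i : Fin k, Fin (d i) → ℕ))
    (hU : ∀ x ∈ U, ∀ y, (∀ i j, x i j ≤ y i j) → y ∈ U) :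
    ∃ G : Finset (∀ i : Fin k, Fin (d i) → ℕ),
      ∀ r, r ∈ U ↔ ∃ g ∈ G, ∀ i j, g i j ≤ r i j := by
  classical
  set tot : (∀ i : Fin k, Fin (d i) → ℕ) → ℕ := fun x => ∑ i, ∑ j, x i j with htot
  -- strict decrease in the product order decreases the total
  have hstrict : ∀ x y : (∀ i : Fin k, Fin (d i) → ℕ), (∀ i j, x i j ≤ y i j) → x ≠ y → tot x < tot y := by
    intro x y hle hne
    have hex : ∃ i j, x i j < y i j := by
      by_contra hcon
      push_neg at hcon
      exact hne (funext fun i => funext fun j => le_antisymm (hle i j) (hcon i j))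
    obtain ⟨i, j, hij⟩ := hex
    refine Finset.sum_lt_sum (fun i _ => Finset.sum_le_sum fun j _ => hle i j)
      ⟨i, Finset.mem_univ i, Finset.sum_lt_sum (fun j _ => hle i j)
        ⟨j, Finset.mem_univ j, hij⟩⟩
  set M : Set (∀ i : Fin k, Fin (d i) → ℕ) := {x | x ∈ U ∧ ∀ y ∈ U, (∀ i j, y i j ≤ x i j) → y = x} with hM
  have hMfin : M.Finite := by
    refine IsAntichain.finite_of_partiallyWellOrderedOn (r := fun x y => ∀ i j, x i j ≤ y i j)
      ?_ (pwo d M)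
    intro x hx y hy hne hle
    exact hne (hy.2 x hx.1 hle)
  -- every element of U lies above a minimal element
  have hmin : ∀ r ∈ U, ∃ g ∈ M, ∀ i j, g i j ≤ r i j := by
    intro r hr
    set T : Set ℕ := {c | ∃ x ∈ U, (∀ i j, x i j ≤ r i j) ∧ tot x = c} with hT
    have hTne : T.Nonempty := ⟨tot r, r, hr, fun i j => le_refl _, rfl⟩
    obtain ⟨c₀, hc₀, hc₀min⟩ := Nat.lt_wfRel.wf.has_min T hTne
    obtain ⟨x, hxU, hxr, hxc⟩ := hc₀
    refine ⟨x, ⟨hxU, fun y hyU hyx => ?_⟩, hxr⟩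
    by_contra hne
    exact hc₀min (tot y) ⟨y, hyU, fun i j => le_trans (hyx i j) (hxr i j), rfl⟩
      (hxc ▸ hstrict y x hyx hne)
  refine ⟨hMfin.toFinset, fun r => ⟨fun hr => ?_, fun ⟨g, hgG, hgr⟩ => ?_⟩⟩
  · obtain ⟨g, hgM, hgr⟩ := hmin r hr
    exact ⟨g, hMfin.mem_toFinset.mpr hgM, hgr⟩
  · exact hU g (hMfin.mem_toFinset.mp hgG).1 r hgr


/-! ### Boxes associated to choice functions -/

variable {k : ℕ} {d : Fin k → ℕ}

def bc (G : Finset (∀ i : Fin k, Fin (d i) → ℕ))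
    (c : ↥G → Σ i : Fin k, Fin (d i)) : ∀ i : Fin k, Fin (d i) → WithTop ℕ :=
  fun i j => (G.attach.filter fun g => c g = ⟨i, j⟩).inf
    fun g => ((g.1 i j : ℕ) : WithTop ℕ)

def binf (G : Finset (∀ i : Fin k, Fin (d i) → ℕ))
    (S : Finset (↥G → Σ i : Fin k, Fin (d i))) : ∀ i : Fin k, Fin (d i) → WithTop ℕ :=
  fun i j => S.inf fun c => bc G c i j

theorem lt_bc (G : Finset (∀ i : Fin k, Fin (d i) → ℕ))
    (c : ↥G → Σ i : Fin k, Fin (d i)) (r : ∀ i : Fin k, Fin (d i) → ℕ)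
    (i : Fin k) (j : Fin (d i)) :
    ((r i j : ℕ) : WithTop ℕ) < bc G c i j ↔
      ∀ g : ↥G, c g = ⟨i, j⟩ → r i j < g.1 i j := by
  rw [bc, Finset.lt_inf_iff (by rw [Nat.cast_withTop]; exact WithTop.coe_lt_top _)]
  constructor
  · intro h g hg
    have := h g (Finset.mem_filter.mpr ⟨Finset.mem_attach _ _, hg⟩)
    rw [Nat.cast_withTop, Nat.cast_withTop, WithTop.coe_lt_coe] at this
    exact this
  · intro h g hg
    rw [Nat.cast_withTop, Nat.cast_withTop, WithTop.coe_lt_coe]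
    exact h g (Finset.mem_filter.mp hg).2

theorem lt_binf (G : Finset (∀ i : Fin k, Fin (d i) → ℕ))
    (S : Finset (↥G → Σ i : Fin k, Fin (d i))) (r : ∀ i : Fin k, Fin (d i) → ℕ)
    (i : Fin k) (j : Fin (d i)) :
    ((r i j : ℕ) : WithTop ℕ) < binf G S i j ↔
      ∀ c ∈ S, ((r i j : ℕ) : WithTop ℕ) < bc G c i j := by
  rw [binf, Finset.lt_inf_iff (by rw [Nat.cast_withTop]; exact WithTop.coe_lt_top _)]

theorem lt_top' (a : ℕ) : ((a : ℕ) : WithTop ℕ) < (⊤ : WithTop ℕ) := by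
  rw [Nat.cast_withTop]; exact WithTop.coe_lt_top _

end Statement14Aux

open Statement14Aux in
/-- **Corollary 4.3.** Let `I` be an ideal of `ℕ^m` (a `≼`-downward closed set, with
coordinates indexed by pairs `(i, j)`, `i : Fin k`, `j : Fin (d i)`).  Then the
counting function `H_I(s̄) = #{r̄ ∈ I : ‖r̄‖ = s̄}` is eventually (for `min(s̄)`
large) given by a polynomial in `ℚ[Y₁,…,Y_k]`. -/
theorem statement14 {k : ℕ} (hk : 0 < k) (d : Fin k → ℕ) (hd : ∀ i, 0 < d i)
    (I : Set (∀ i : Fin k, Fin (d i) → ℕ))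
    (hI : ∀ r ∈ I, ∀ r' : ∀ i : Fin k, Fin (d i) → ℕ,
      (∀ i j, r' i j ≤ r i j) → r' ∈ I) :
    ∃ P : MvPolynomial (Fin k) ℚ, ∃ N : ℕ, ∀ s : Fin k → ℕ, (∀ i, N ≤ s i) →
      ((Nat.card {r : ∀ i : Fin k, Fin (d i) → ℕ //
          r ∈ I ∧ ∀ i, ∑ j, r i j = s i}) : ℚ)
        = MvPolynomial.eval (fun i => (s i : ℚ)) P := by
  classical
  obtain ⟨G, hG⟩ := exists_gen d Iᶜ (fun x hx y hle hyI => hx (hI y hyI x hle))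
  -- the ideal is the union of the boxes indexed by choice functions
  have hbox : ∀ r, r ∈ I ↔ ∃ c : ↥G → Σ i : Fin k, Fin (d i),
      ∀ i j, ((r i j : ℕ) : WithTop ℕ) < bc G c i j := by
    intro r
    constructor
    · intro hr
      have h1 : ∀ g : ↥G, ∃ p : Σ i : Fin k, Fin (d i), r p.1 p.2 < g.1 p.1 p.2 := by
        intro g
        have h2 : ¬ (∀ i j, g.1 i j ≤ r i j) := by
          intro hle
          exact ((hG r).mpr ⟨g.1, g.2, hle⟩) hr
        push_neg at h2
        obtain ⟨i, j, h⟩ := h2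
        exact ⟨⟨i, j⟩, h⟩
      choose c hc using h1
      refine ⟨c, fun i j => (lt_bc G c r i j).mpr fun g hg => ?_⟩
      have := hc g
      rw [hg] at this
      exact this
    · rintro ⟨c, hc⟩
      by_contra hr
      obtain ⟨g, hgG, hle⟩ := (hG r).mp hr
      have := (lt_bc G c r (c ⟨g, hgG⟩).1 (c ⟨g, hgG⟩).2).mp
        (hc (c ⟨g, hgG⟩).1 (c ⟨g, hgG⟩).2) ⟨g, hgG⟩ rfl
      exact absurd (hle (c ⟨g, hgG⟩).1 (c ⟨g, hgG⟩).2) (not_le.mpr this)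
  -- counting within boxes
  have key : ∀ (b : ∀ i : Fin k, Fin (d i) → WithTop ℕ) (s : Fin k → ℕ),
      (∑ r ∈ Fintype.piFinset (fun i => gbox (d i) (fun _ => (⊤ : WithTop ℕ)) (s i)),
          if (∀ i j, ((r i j : ℕ) : WithTop ℕ) < b i j) then (1 : ℚ) else 0)
        = ∏ i, ((gbox (d i) (b i) (s i)).card : ℚ) := by
    intro b s
    rw [Finset.sum_boole]
    have hfil : ((Fintype.piFinset fun i => gbox (d i) (fun _ => (⊤ : WithTop ℕ)) (s i)).filter
          fun r => ∀ i j, ((r i j : ℕ) : WithTop ℕ) < b i j)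
        = Fintype.piFinset (fun i => gbox (d i) (b i) (s i)) := by
      ext r
      simp only [Finset.mem_filter, Fintype.mem_piFinset, mem_gbox]
      constructor
      · rintro ⟨hT, hb⟩ i
        exact ⟨fun j => hb i j, (hT i).2⟩
      · intro h
        exact ⟨fun i => ⟨fun j => lt_top' _, (h i).2⟩, fun i j => (h i).1 j⟩
    rw [hfil, Fintype.card_piFinset]
    push_cast
    rfl
  -- the main identity
  have main : ∀ s : Fin k → ℕ,
      ((Nat.card {r : ∀ i : Fin k, Fin (d i) → ℕ //
          r ∈ I ∧ ∀ i, ∑ j, r i j = s i}) : ℚ)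
        = (∏ i, ((gbox (d i) (fun _ => (⊤ : WithTop ℕ)) (s i)).card : ℚ))
          - ∑ S ∈ (Finset.univ : Finset (↥G → Σ i : Fin k, Fin (d i))).powerset,
              (-1 : ℚ) ^ S.card * ∏ i, ((gbox (d i) (binf G S i) (s i)).card : ℚ) := by
    intro s
    set T := Fintype.piFinset (fun i => gbox (d i) (fun _ => (⊤ : WithTop ℕ)) (s i)) with hT
    have hTmem : ∀ r, r ∈ T ↔ ∀ i, ∑ j, r i j = s i := by
      intro r
      rw [hT]
      simp only [Fintype.mem_piFinset, mem_gbox]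
      exact ⟨fun h i => (h i).2, fun h i => ⟨fun j => lt_top' _, h i⟩⟩
    -- Nat.card as a finset card
    have e : {r : ∀ i : Fin k, Fin (d i) → ℕ // r ∈ I ∧ ∀ i, ∑ j, r i j = s i}
        ≃ {r : ∀ i : Fin k, Fin (d i) → ℕ // r ∈ T.filter fun r => r ∈ I} :=
      Equiv.subtypeEquivRight fun r => by
        rw [Finset.mem_filter, hTmem r, and_comm]
    rw [Nat.card_congr e, Nat.card_eq_finsetCard, Finset.card_filter]
    push_cast
    -- pointwise indicator identity
    have hpoint : ∀ r, (if r ∈ I then (1 : ℚ) else 0)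
        = 1 - ∏ c : ↥G → Σ i : Fin k, Fin (d i),
            (1 - if (∀ i j, ((r i j : ℕ) : WithTop ℕ) < bc G c i j) then (1 : ℚ) else 0) := by
      intro r
      by_cases hr : r ∈ I
      · obtain ⟨c, hcb⟩ := (hbox r).mp hr
        rw [if_pos hr]
        have h0 : (1 - if (∀ i j, ((r i j : ℕ) : WithTop ℕ) < bc G c i j)
            then (1 : ℚ) else 0) = 0 := by rw [if_pos hcb, sub_self]
        rw [Finset.prod_eq_zero (Finset.mem_univ c) h0, sub_zero]
      · rw [if_neg hr, Finset.prod_eq_one, sub_self]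
        intro c _
        rw [if_neg, sub_zero]
        intro hcb
        exact hr ((hbox r).mpr ⟨c, hcb⟩)
    rw [Finset.sum_congr rfl fun r _ => hpoint r, Finset.sum_sub_distrib]
    congr 1
    · rw [← key (fun _ _ => (⊤ : WithTop ℕ)) s]
      exact Finset.sum_congr rfl fun r _ => (if_pos fun i j => lt_top' _).symm
    -- expansion of the product
    have hexp : ∀ r : ∀ i : Fin k, Fin (d i) → ℕ, (∏ c : ↥G → Σ i : Fin k, Fin (d i),
          (1 - if (∀ i j, ((r i j : ℕ) : WithTop ℕ) < bc G c i j) then (1 : ℚ) else 0))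
        = ∑ S ∈ (Finset.univ : Finset (↥G → Σ i : Fin k, Fin (d i))).powerset,
            (-1 : ℚ) ^ S.card *
              if (∀ i j, ((r i j : ℕ) : WithTop ℕ) < binf G S i j) then (1 : ℚ) else 0 := by
      intro r
      have h1 : ∀ c : ↥G → Σ i : Fin k, Fin (d i),
          (1 - if (∀ i j, ((r i j : ℕ) : WithTop ℕ) < bc G c i j) then (1 : ℚ) else 0)
          = (-1) * (if (∀ i j, ((r i j : ℕ) : WithTop ℕ) < bc G c i j) then (1 : ℚ) else 0)
              + 1 := by
        intro c; ring
      rw [Finset.prod_congr rfl fun c _ => h1 c, Finset.prod_add]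
      refine Finset.sum_congr rfl fun S _ => ?_
      rw [Finset.prod_const_one, mul_one, Finset.prod_mul_distrib, Finset.prod_const]
      congr 1
      -- product of indicators is the indicator of the intersection box
      by_cases hall : ∀ c ∈ S, ∀ i j, ((r i j : ℕ) : WithTop ℕ) < bc G c i j
      · rw [if_pos, Finset.prod_eq_one fun c hc => if_pos (hall c hc)]
        intro i j
        exact (lt_binf G S r i j).mpr fun c hc => hall c hc i j
      · obtain ⟨c, hc⟩ := not_forall.mp hall
        obtain ⟨hcS, hnc⟩ := Classical.not_imp.mp hc
        have h0 : (if (∀ i j, ((r i j : ℕ) : WithTop ℕ) < bc G c i j)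
            then (1 : ℚ) else 0) = 0 := if_neg hnc
        rw [Finset.prod_eq_zero hcS h0, if_neg]
        intro hin
        exact hnc fun i j => (lt_binf G S r i j).mp (hin i j) c hcS
    rw [Finset.sum_congr rfl fun r _ => hexp r, Finset.sum_comm]
    refine Finset.sum_congr rfl fun S _ => ?_
    rw [← Finset.mul_sum, key (binf G S) s]
  -- the right-hand side is eventually polynomial
  have hMEP : MEP (fun s : Fin k → ℕ =>
      (∏ i, ((gbox (d i) (fun _ => (⊤ : WithTop ℕ)) (s i)).card : ℚ))
        - ∑ S ∈ (Finset.univ : Finset (↥G → Σ i : Fin k, Fin (d i))).powerset,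
            (-1 : ℚ) ^ S.card * ∏ i, ((gbox (d i) (binf G S i) (s i)).card : ℚ)) := by
    refine MEP.sub
      (MEP.prod_EP (fun i t => ((gbox (d i) ((fun _ => (⊤ : WithTop ℕ)) : Fin (d i) → WithTop ℕ) t).card : ℚ))
        fun i => gcount_EP (d i) _)
      (MEP.finsetSum fun S _ => MEP.const_mul _
        (MEP.prod_EP (fun i t => ((gbox (d i) (binf G S i) t).card : ℚ))
          fun i => gcount_EP (d i) _))
  obtain ⟨P, N, hP⟩ := hMEP
  exact ⟨P, N, fun s hs => by rw [main s]; exact hP s hs⟩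
end
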